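/- Let (G,L) be a minimal list-obstruction with L(v) ⊆ {1,2,3} and |L(v)| ≤ 2 for all v, all lists nonempty, and suppose V_1 = {v : |L(v)| = 1} is empty. Fix any vertex x with L(x) = {1,2}. Then for each α ∈ {1,2} there exists a (not necessarily induced) path P^α starting at x such that: assigning color α to x and updating along P^α colors every vertex of P^α; some edge of G joins two vertices of P^α receiving the same color; and V(G) = V(P^1) ∪ V(P^2). -/

import Mathlib

def ListColorableOn {V : Type*} (G : SimpleGraph V) (L : V → Finset ℕ) (S : Set V) : Prop :=
  ∃ c : V → ℕ, (∀ v ∈ S, c v ∈ L v) ∧ ∀ u ∈ S, ∀ w ∈ S, G.Adj u w → c u ≠ c w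

def MinimalListObstruction {V : Type*} (G : SimpleGraph V) (L : V → Finset ℕ) : Prop :=
  ¬ ListColorableOn G L Set.univ ∧ ∀ S : Set V, S ≠ Set.univ → ListColorableOn G L S

/-- A path `v 0 - … - v n` in `G` starting at `x`, together with the coloring obtained
by giving `x` the color `α` and updating along the path (each next vertex, whose list
has size two, loses the color of the previous one), such that every vertex of the path
gets colored and some edge of `G` joins two path vertices receiving the same color. -/
structure UpdatePath {V : Type*} (G : SimpleGraph V) (L : V → Finset ℕ)
    (x : V) (α : ℕ) where
  n : ℕ
  v : Fin (n + 1) → V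
  inj : Function.Injective v
  start : v 0 = x
  adj : ∀ i : Fin n, G.Adj (v i.castSucc) (v i.succ)
  c : Fin (n + 1) → ℕ
  cstart : c 0 = α
  upd : ∀ i : Fin n, c i.succ ∈ L (v i.succ) ∧ c i.castSucc ∈ L (v i.succ) ∧
    c i.succ ≠ c i.castSucc
  bad : ∃ i j : Fin (n + 1), G.Adj (v i) (v j) ∧ c i = c j



open List

section Aux

variable {V : Type*} (G : SimpleGraph V) (L : V → Finset ℕ)

/-- one propagation step -/
def PStep (p q : V × ℕ) : Prop :=
  G.Adj p.1 q.1 ∧ q.2 ∈ L q.1 ∧ p.2 ∈ L q.1 ∧ q.2 ≠ p.2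

/-- propagation chain from `(x, α)` -/
def PC (x : V) (α : ℕ) (l : List (V × ℕ)) : Prop :=
  l.IsChain (PStep G L) ∧ (l.map Prod.fst).Nodup ∧ l.head? = some (x, α)

/-- chain contains a monochromatic edge -/
def BadL (l : List (V × ℕ)) : Prop :=
  ∃ p ∈ l, ∃ q ∈ l, G.Adj p.1 q.1 ∧ p.2 = q.2

variable {G L}

lemma two_of_card {v : V} (h2 : (L v).card = 2) {a b d : ℕ} (ha : a ∈ L v) (hb : b ∈ L v)
    (hab : a ≠ b) (hd : d ∈ L v) : d = a ∨ d = b := by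
  have hsub : ({a, b} : Finset ℕ) ⊆ L v := by
    intro z hz; simp only [Finset.mem_insert, Finset.mem_singleton] at hz
    rcases hz with rfl | rfl <;> assumption
  have hcard : (L v).card ≤ ({a, b} : Finset ℕ).card := by
    rw [h2, Finset.card_insert_of_notMem (by simpa using hab), Finset.card_singleton]
  have := Finset.eq_of_subset_of_card_le hsub hcard
  have hd' : d ∈ ({a, b} : Finset ℕ) := this ▸ hd
  simpa using hd'

lemma exists_other {v : V} (h2 : (L v).card = 2) {γ : ℕ} (hγ : γ ∈ L v) :
    ∃ δ ∈ L v, δ ≠ γ := by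
  have hpos : 0 < ((L v).erase γ).card := by
    rw [Finset.card_erase_of_mem hγ, h2]; norm_num
  obtain ⟨δ, hδ⟩ := Finset.card_pos.mp hpos
  exact ⟨δ, Finset.mem_of_mem_erase hδ, Finset.ne_of_mem_erase hδ⟩

variable {x : V} {α : ℕ}

lemma pc_ne_nil {l : List (V × ℕ)} (hl : PC G L x α l) : l ≠ [] := by
  rintro rfl; simpa [PC] using hl

lemma pc_head_mem {l : List (V × ℕ)} (hl : PC G L x α l) : (x, α) ∈ l :=
  List.mem_of_mem_head? (by rw [hl.2.2]; rfl)

lemma pc_color_mem (hα : α ∈ L x) {l : List (V × ℕ)} (hl : PC G L x α l)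
    {p : V × ℕ} (hp : p ∈ l) : p.2 ∈ L p.1 := by
  obtain ⟨s, t, rfl⟩ := List.append_of_mem hp
  cases s with
  | nil =>
    have : p = (x, α) := by simpa using hl.2.2
    subst this; exact hα
  | cons a s' =>
    have hch := hl.1
    rw [List.isChain_append] at hch
    obtain ⟨-, -, hstep⟩ := hch
    obtain ⟨q, hq⟩ : ∃ q, (a :: s').getLast? = some q := ⟨_, List.getLast?_eq_getLast (by simp)⟩
    have := hstep q (by rw [hq]; rfl) p (by rfl)
    exact this.2.1

/-- a member of a chain is the endpoint of a prefix chain -/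
lemma reach_of_mem {l : List (V × ℕ)} (hl : PC G L x α l) {p : V × ℕ} (hp : p ∈ l) :
    ∃ l', PC G L x α l' ∧ l'.getLast? = some p ∧ l'.length ≤ l.length := by
  obtain ⟨s, t, rfl⟩ := List.append_of_mem hp
  refine ⟨s ++ [p], ⟨?_, ?_, ?_⟩, List.getLast?_concat, by simp⟩
  · exact hl.1.prefix ⟨t, by simp⟩
  · exact (List.Nodup.sublist (List.Sublist.map _ (List.IsPrefix.sublist ⟨t, by simp⟩)) hl.2.1)
  · cases s with
    | nil => simpa using hl.2.2
    | cons a s' => simpa using hl.2.2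

/-- extending a chain across an edge into a fresh vertex -/
lemma pc_extend (h2 : ∀ v, (L v).card = 2) {l : List (V × ℕ)} (hl : PC G L x α l)
    {v0 : V} {γ : ℕ} (hlast : l.getLast? = some (v0, γ)) {u : V}
    (hadj : G.Adj v0 u) (hγu : γ ∈ L u) (hu : u ∉ l.map Prod.fst) :
    ∃ δ ∈ L u, δ ≠ γ ∧ PC G L x α (l ++ [(u, δ)]) ∧
      (l ++ [(u, δ)]).getLast? = some (u, δ) := by
  obtain ⟨δ, hδL, hδγ⟩ := exists_other (h2 u) hγu
  have hne := pc_ne_nil hl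
  refine ⟨δ, hδL, hδγ, ⟨?_, ?_, ?_⟩, List.getLast?_concat⟩
  · rw [List.isChain_append]
    refine ⟨hl.1, List.isChain_singleton _, ?_⟩
    intro a ha b hb
    rw [hlast] at ha
    simp only [Option.mem_def, Option.some.injEq] at ha
    simp only [List.head?_cons, Option.mem_def, Option.some.injEq] at hb
    subst ha; subst hb
    exact ⟨hadj, hδL, hγu, hδγ⟩
  · rw [List.map_append, List.nodup_append]
    refine ⟨hl.2.1, by simp, ?_⟩
    intro z hz b hz'
    simp only [List.map_cons, List.map_nil, List.mem_singleton] at hz'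
    subst hz'; intro h; subst h; exact hu hz
  · rw [List.head?_append, hl.2.2]; rfl

end Aux

section Uniq

variable {V : Type*} [Fintype V] {G : SimpleGraph V} {L : V → Finset ℕ} {x : V} {α : ℕ}

lemma reach_unique_aux (h2 : ∀ v, (L v).card = 2) (hα : α ∈ L x)
    (hA : ∀ l, PC G L x α l → ¬ BadL G l) :
    ∀ m : ℕ, ∀ lP lQ : List (V × ℕ), ∀ v : V, ∀ γ δ : ℕ,
      PC G L x α lP → PC G L x α lQ → lP.getLast? = some (v, γ) →
      lQ.getLast? = some (v, δ) → γ ≠ δ →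
      (lP.length + lQ.length) * (Fintype.card V + 1) + lQ.length ≤ m → False := by
  intro m
  induction m using Nat.strong_induction_on with
  | _ m IH =>
  intro lP lQ v γ δ hP hQ hPl hQl hγδ hm
  have hQne : lQ ≠ [] := pc_ne_nil hQ
  have hPne : lP ≠ [] := pc_ne_nil hP
  have hvγP : (v, γ) ∈ lP := List.mem_of_mem_getLast? (by rw [hPl]; rfl)
  have hγv : γ ∈ L v := pc_color_mem hα hP hvγP
  have hQlast : lQ.getLast hQne = (v, δ) := by
    have h1 := List.getLast?_eq_getLast hQne
    rw [h1] at hQl; exact Option.some.inj hQl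
  have hQsplit : lQ.dropLast ++ [(v, δ)] = lQ := by
    rw [← hQlast]; exact List.dropLast_append_getLast hQne
  by_cases hQ1 : lQ.dropLast = []
  · -- base case : lQ = [(v, δ)], so v = x, δ = α; then also γ = α
    have hlQ : lQ = [(v, δ)] := by rw [← hQsplit, hQ1]; rfl
    have hvx : (v, δ) = (x, α) := by
      have := hQ.2.2; rw [hlQ] at this; simpa using this
    have hv : v = x := (Prod.mk.injEq _ _ _ _ ▸ hvx).1
    have hδα : δ = α := (Prod.mk.injEq _ _ _ _ ▸ hvx).2
    have hxmem : (x, α) ∈ lP := pc_head_mem hP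
    have : (x, α) = (v, γ) := by
      apply List.inj_on_of_nodup_map hP.2.1 hxmem hvγP
      simp [hv]
    have : γ = α := by rw [hv] at this; exact ((Prod.mk.injEq _ _ _ _ ▸ this).2).symm
    exact hγδ (by rw [this, hδα])
  · -- main case
    have hQ'ne : lQ.dropLast ≠ [] := hQ1
    have hQ'pc : PC G L x α lQ.dropLast := by
      refine ⟨hQ.1.prefix ⟨[(v, δ)], hQsplit⟩, ?_, ?_⟩
      · exact List.Nodup.sublist (List.Sublist.map _
          (List.IsPrefix.sublist ⟨[(v, δ)], hQsplit⟩)) hQ.2.1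
      · have hh := hQ.2.2
        rw [← hQsplit] at hh
        cases h : lQ.dropLast with
        | nil => exact absurd h hQ1
        | cons a t => rw [h] at hh; simpa using hh
    obtain ⟨⟨w, σ⟩, hwσ⟩ : ∃ p, lQ.dropLast.getLast? = some p :=
      ⟨_, List.getLast?_eq_getLast hQ'ne⟩
    have hstep : PStep G L (w, σ) (v, δ) := by
      have hch := hQ.1
      rw [← hQsplit, List.isChain_append] at hch
      exact hch.2.2 (w, σ) (by rw [hwσ]; rfl) (v, δ) rfl
    obtain ⟨hadjwv, hδv, hσv, hδσ⟩ := hstep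
    have hσγ : γ = σ := by
      rcases two_of_card (h2 v) hδv hσv hδσ hγv with h | h
      · exact absurd h hγδ
      · exact h
    subst hσγ
    have hwγQ : (w, γ) ∈ lQ.dropLast := List.mem_of_mem_getLast? (by rw [hwσ]; rfl)
    have hγw : γ ∈ L w := pc_color_mem hα hQ'pc hwγQ
    -- length bookkeeping
    have hNP : lP.length ≤ Fintype.card V := by
      have := hP.2.1.length_le_card; simpa using this
    have hNQ : lQ.length ≤ Fintype.card V := by
      have := hQ.2.1.length_le_card; simpa using this
    obtain ⟨b0, hb0⟩ : ∃ b0, lQ.length = b0 + 1 := by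
      cases lQ with
      | nil => exact absurd rfl hQne
      | cons a t => exact ⟨t.length, by simp⟩
    have hQ'len : lQ.dropLast.length = b0 := by rw [List.length_dropLast, hb0]; omega
    have hb0N : b0 ≤ Fintype.card V := by omega
    set N := Fintype.card V with hN
    by_cases hw : w ∈ lP.map Prod.fst
    · obtain ⟨p, hpmem, hpw⟩ := List.mem_map.mp hw
      by_cases he : p.2 = γ
      · -- monochromatic edge in lP
        apply hA lP hP
        exact ⟨p, hpmem, (v, γ), hvγP, by rw [hpw]; exact hadjwv, by rw [he]⟩
      · -- strictly smaller counterexample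
        obtain ⟨lP', hP', hP'l, hP'len⟩ := reach_of_mem hP hpmem
        have hple : p = (w, p.2) := by rw [← hpw]
        refine IH ((lP'.length + lQ.dropLast.length) * (N + 1) + lQ.dropLast.length)
          ?_ lP' lQ.dropLast w p.2 γ hP' hQ'pc (by rw [hP'l, hple]) (by rw [hwσ]) he le_rfl
        rw [hQ'len]
        have hm' : (lP.length + (b0 + 1)) * (N + 1) + (b0 + 1) ≤ m := by rw [← hb0]; exact hm
        calc (lP'.length + b0) * (N + 1) + b0
            ≤ (lP.length + b0) * (N + 1) + N :=
              Nat.add_le_add (Nat.mul_le_mul_right _ (by omega)) hb0N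
          _ < (lP.length + b0) * (N + 1) + (N + 1) + (b0 + 1) := by omega
          _ = (lP.length + (b0 + 1)) * (N + 1) + (b0 + 1) := by ring
          _ ≤ m := hm'
    · -- extend lP by (w, ·)
      obtain ⟨δ', hδ'L, hδ'γ, hPC'', hlast''⟩ := pc_extend h2 hP hPl hadjwv.symm hγw hw
      refine IH (((lP ++ [(w, δ')]).length + lQ.dropLast.length) * (N + 1) + lQ.dropLast.length)
        ?_ (lP ++ [(w, δ')]) lQ.dropLast w δ' γ hPC'' hQ'pc hlast'' (by rw [hwσ]) hδ'γ le_rfl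
      rw [hQ'len, List.length_append, List.length_singleton]
      have hm' : (lP.length + (b0 + 1)) * (N + 1) + (b0 + 1) ≤ m := by rw [← hb0]; exact hm
      calc (lP.length + 1 + b0) * (N + 1) + b0
          = (lP.length + (b0 + 1)) * (N + 1) + b0 := by ring
        _ < (lP.length + (b0 + 1)) * (N + 1) + (b0 + 1) := by omega
        _ ≤ m := hm'

end Uniq

section Exists

variable {V : Type*} [Fintype V] {G : SimpleGraph V} {L : V → Finset ℕ} {x : V} {α : ℕ}

lemma exists_badpath (h2 : ∀ v, (L v).card = 2) (hα : α ∈ L x)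
    (hmin : MinimalListObstruction G L) :
    ∃ l, PC G L x α l ∧ BadL G l := by
  classical
  by_contra hA'
  push_neg at hA'
  have hA : ∀ l, PC G L x α l → ¬ BadL G l := hA'
  set R : V → ℕ → Prop := fun v γ => ∃ l, PC G L x α l ∧ l.getLast? = some (v, γ) with hR
  have hxR : R x α := ⟨[(x, α)], ⟨List.isChain_singleton _, by simp, rfl⟩, by simp⟩
  have huniq : ∀ v γ δ, R v γ → R v δ → γ = δ := by
    rintro v γ δ ⟨lP, hP, hPl⟩ ⟨lQ, hQ, hQl⟩
    by_contra h
    exact reach_unique_aux h2 hα hA _ lP lQ v γ δ hP hQ hPl hQl h le_rfl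
  have hRmem : ∀ v γ, R v γ → γ ∈ L v := by
    rintro v γ ⟨l, hl, hll⟩
    exact pc_color_mem hα hl (List.mem_of_mem_getLast? (by rw [hll]; rfl))
  have hmemR : ∀ l, PC G L x α l → ∀ p ∈ l, R p.1 p.2 := by
    intro l hl p hp
    obtain ⟨l', h1, h2', _⟩ := reach_of_mem hl hp
    exact ⟨l', h1, by rw [h2']⟩
  have hclose : ∀ v γ u, R v γ → G.Adj v u → γ ∈ L u → ∃ δ, R u δ ∧ δ ∈ L u ∧ δ ≠ γ := by
    rintro v γ u ⟨l, hl, hll⟩ hadj hγu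
    by_cases hu : u ∈ l.map Prod.fst
    · obtain ⟨p, hpmem, hpu⟩ := List.mem_map.mp hu
      have hRp : R u p.2 := by
        have := hmemR l hl p hpmem; rwa [hpu] at this
      have hne : p.2 ≠ γ := by
        intro he
        apply hA l hl
        refine ⟨(v, γ), List.mem_of_mem_getLast? (by rw [hll]; rfl), p, hpmem, ?_, ?_⟩
        · show G.Adj v p.1; rw [hpu]; exact hadj
        · show γ = p.2; rw [he]
      refine ⟨p.2, hRp, ?_, hne⟩
      · have := pc_color_mem hα hl hpmem; rwa [hpu] at this
    · obtain ⟨δ, hδL, hδγ, hPC', hlast'⟩ := pc_extend h2 hl hll hadj hγu hu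
      exact ⟨δ, ⟨_, hPC', hlast'⟩, hδL, hδγ⟩
  set S : Set V := {v | ∃ γ, R v γ} with hS
  have hxS : x ∈ S := ⟨α, hxR⟩
  have hScne : Sᶜ ≠ Set.univ := by
    intro h
    have : x ∈ Sᶜ := h ▸ Set.mem_univ x
    exact this hxS
  obtain ⟨c₂, hc₂mem, hc₂prop⟩ := hmin.2 Sᶜ hScne
  set c : V → ℕ := fun v => if h : ∃ γ, R v γ then h.choose else c₂ v with hc
  have hcR : ∀ v, v ∈ S → R v (c v) := by
    intro v hv
    have hcv : c v = hv.choose := by simp only [hc]; exact dif_pos hv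
    rw [hcv]
    exact hv.choose_spec
  have hcmem : ∀ v, c v ∈ L v := by
    intro v
    by_cases hv : ∃ γ, R v γ
    · exact hRmem _ _ (hcR v hv)
    · have hcv : c v = c₂ v := by simp only [hc]; exact dif_neg hv
      rw [hcv]
      exact hc₂mem v hv
  apply hmin.1
  refine ⟨c, fun v _ => hcmem v, ?_⟩
  intro u _ w _ hadj heq
  by_cases hu : u ∈ S <;> by_cases hw2 : w ∈ S
  · -- both reachable with the same color : produces a bad chain
    have hRu := hcR u hu
    have hRw := hcR w hw2
    rw [heq] at hRu
    obtain ⟨l, hl, hll⟩ := hRw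
    by_cases hul : u ∈ l.map Prod.fst
    · obtain ⟨p, hpmem, hpu⟩ := List.mem_map.mp hul
      have hRp : R u p.2 := by
        have := hmemR l hl p hpmem; rwa [hpu] at this
      have hpc : p.2 = c w := huniq u _ _ hRp hRu
      apply hA l hl
      refine ⟨p, hpmem, (w, c w), List.mem_of_mem_getLast? (by rw [hll]; rfl), ?_, hpc⟩
      show G.Adj p.1 w; rw [hpu]; exact hadj
    · have hcwu : c w ∈ L u := by rw [← heq]; exact hcmem u
      obtain ⟨δ, hδL, hδne, hPC', hlast'⟩ := pc_extend h2 hl hll hadj.symm hcwu hul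
      exact hδne (huniq u δ (c w) ⟨_, hPC', hlast'⟩ hRu)
  · -- u ∈ S, w ∉ S
    have hRu := hcR u hu
    have hnot : c u ∉ L w := by
      intro hmem
      obtain ⟨δ, hRδ, _, _⟩ := hclose u (c u) w hRu hadj hmem
      exact hw2 ⟨δ, hRδ⟩
    exact hnot (by rw [heq]; exact hcmem w)
  · -- w ∈ S, u ∉ S
    have hRw := hcR w hw2
    have hnot : c w ∉ L u := by
      intro hmem
      obtain ⟨δ, hRδ, _, _⟩ := hclose w (c w) u hRw hadj.symm hmem
      exact hu ⟨δ, hRδ⟩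
    exact hnot (by rw [← heq]; exact hcmem u)
  · have h1 : c u = c₂ u := by simp only [hc]; exact dif_neg hu
    have h2 : c w = c₂ w := by simp only [hc]; exact dif_neg hw2
    exact hc₂prop u hu w hw2 hadj (by rw [← h1, ← h2]; exact heq)

end Exists

section Convert

variable {V : Type*} {G : SimpleGraph V} {L : V → Finset ℕ} {x : V} {α : ℕ}

lemma toUpdatePath {l : List (V × ℕ)} (hl : PC G L x α l) (hb : BadL G l) :
    Nonempty (UpdatePath G L x α) := by
  have hne : l ≠ [] := pc_ne_nil hl
  obtain ⟨n, hn⟩ : ∃ n, l.length = n + 1 := by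
    cases l with
    | nil => exact absurd rfl hne
    | cons a t => exact ⟨t.length, by simp⟩
  have hnodup : l.Nodup := List.Nodup.of_map _ hl.2.1
  have hget0 : l.get ⟨0, by omega⟩ = (x, α) := by
    cases l with
    | nil => exact absurd rfl hne
    | cons a t => simpa using hl.2.2
  have hcast0 : (Fin.cast hn.symm (0 : Fin (n + 1))) = ⟨0, by omega⟩ := by
    ext; simp
  have hchain := List.isChain_iff_getElem.mp hl.1
  refine ⟨⟨n, fun i => (l.get (Fin.cast hn.symm i)).1, ?_, ?_, ?_,
    fun i => (l.get (Fin.cast hn.symm i)).2, ?_, ?_, ?_⟩⟩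
  · intro i j h
    have hpair : l.get (Fin.cast hn.symm i) = l.get (Fin.cast hn.symm j) :=
      List.inj_on_of_nodup_map hl.2.1 (List.get_mem l _) (List.get_mem l _) h
    have hidx := (hnodup.get_inj_iff).mp hpair
    exact Fin.ext (by simpa using congrArg Fin.val hidx)
  · show (l.get (Fin.cast hn.symm 0)).1 = x
    rw [hcast0, hget0]
  · intro i
    have hstep := hchain i.val (by have := i.isLt; omega)
    exact hstep.1
  · show (l.get (Fin.cast hn.symm 0)).2 = α
    rw [hcast0, hget0]
  · intro i
    have hstep := hchain i.val (by have := i.isLt; omega)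
    exact ⟨hstep.2.1, hstep.2.2.1, hstep.2.2.2⟩
  · obtain ⟨p, hp, q, hq, hadj, hcol⟩ := hb
    obtain ⟨ip, hip⟩ := List.mem_iff_get.mp hp
    obtain ⟨iq, hiq⟩ := List.mem_iff_get.mp hq
    refine ⟨Fin.cast hn ip, Fin.cast hn iq, ?_, ?_⟩
    · show G.Adj (l.get ip).1 (l.get iq).1
      rw [hip, hiq]; exact hadj
    · show (l.get ip).2 = (l.get iq).2
      rw [hip, hiq]; exact hcol

end Convert

theorem stmt_18 {V : Type*} [Fintype V] (G : SimpleGraph V) (L : V → Finset ℕ)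
    (hsub : ∀ v, L v ⊆ ({1, 2, 3} : Finset ℕ)) (hsize : ∀ v, (L v).card ≤ 2)
    (hne : ∀ v, (L v).Nonempty)
    (hmin : MinimalListObstruction G L)
    (hV1 : {v : V | (L v).card = 1} = ∅)
    (x : V) (hx : L x = {1, 2}) :
    ∃ P1 : UpdatePath G L x 1, ∃ P2 : UpdatePath G L x 2,
      Set.range P1.v ∪ Set.range P2.v = Set.univ := by
  have h2 : ∀ v, (L v).card = 2 := by
    intro v
    have h1 : 0 < (L v).card := Finset.card_pos.mpr (hne v)
    have h3 := hsize v
    have h4 : (L v).card ≠ 1 := by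
      intro h
      have hmem : v ∈ {v : V | (L v).card = 1} := h
      rw [hV1] at hmem
      exact hmem
    omega
  have h1x : (1 : ℕ) ∈ L x := by rw [hx]; simp
  have h2x : (2 : ℕ) ∈ L x := by rw [hx]; simp
  obtain ⟨l1, hl1, hb1⟩ := exists_badpath h2 h1x hmin
  obtain ⟨l2, hl2, hb2⟩ := exists_badpath h2 h2x hmin
  obtain ⟨P1⟩ := toUpdatePath hl1 hb1
  obtain ⟨P2⟩ := toUpdatePath hl2 hb2
  refine ⟨P1, P2, ?_⟩
  by_contra hS
  obtain ⟨c, hcm, hcp⟩ := hmin.2 _ hS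
  have hxS : x ∈ Set.range P1.v ∪ Set.range P2.v := Or.inl ⟨0, P1.start⟩
  have hcx : c x ∈ L x := hcm x hxS
  rw [hx] at hcx
  simp only [Finset.mem_insert, Finset.mem_singleton] at hcx
  have key : ∀ (β : ℕ) (P : UpdatePath G L x β),
      Set.range P.v ⊆ Set.range P1.v ∪ Set.range P2.v → c x = β → False := by
    intro β P hsub' hcxβ
    have hkey : ∀ i : Fin (P.n + 1), c (P.v i) = P.c i := by
      intro i
      induction i using Fin.induction with
      | zero => rw [P.start, P.cstart, hcxβ]
      | succ i ih =>
        obtain ⟨hs1, hs2, hs3⟩ := P.upd i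
        have hcm' : c (P.v i.succ) ∈ L (P.v i.succ) := hcm _ (hsub' ⟨i.succ, rfl⟩)
        have hne2 : c (P.v i.succ) ≠ c (P.v i.castSucc) :=
          hcp _ (hsub' ⟨i.succ, rfl⟩) _ (hsub' ⟨i.castSucc, rfl⟩) (P.adj i).symm
        rcases two_of_card (h2 _) hs1 hs2 hs3 hcm' with h | h
        · exact h
        · exact absurd (h.trans ih.symm) hne2
    obtain ⟨i, j, hadj, hceq⟩ := P.bad
    exact hcp _ (hsub' ⟨i, rfl⟩) _ (hsub' ⟨j, rfl⟩) hadj (by rw [hkey i, hkey j, hceq])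
  rcases hcx with h | h
  · exact key 1 P1 Set.subset_union_left h
  · exact key 2 P2 Set.subset_union_right h
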